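/- Let G be a group and 𝓘 a group bornology on G. The family of entourages ε_A = {(x,y) ∈ G × G : y ∈ {x} ∪ Ax} for A ∈ 𝓘 is a base of a coarse structure 𝓔_𝓘 on G, and a subset B ⊆ G is bounded in (G, 𝓔_𝓘) if and only if B ∈ 𝓘. -/

import Mathlib

open Pointwise

def IsIdeal {X : Type*} (I : Set (Set X)) : Prop :=
  ∅ ∈ I ∧ (∀ A ∈ I, ∀ B : Set X, B ⊆ A → B ∈ I) ∧ (∀ A ∈ I, ∀ B ∈ I, A ∪ B ∈ I)

def IsBornology {X : Type*} (B : Set (Set X)) : Prop :=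
  IsIdeal B ∧ (∀ A : Set X, A.Finite → A ∈ B) ∧ ⋃₀ B = Set.univ

def IsGroupBornology {G : Type*} [Group G] (I : Set (Set G)) : Prop :=
  IsBornology I ∧ ∀ A ∈ I, ∀ B ∈ I, A * B⁻¹ ∈ I

def relComp {X : Type*} (ε δ : Set (X × X)) : Set (X × X) :=
  {p | ∃ y, (p.1, y) ∈ ε ∧ (y, p.2) ∈ δ}

def relInv {X : Type*} (ε : Set (X × X)) : Set (X × X) :=
  {p | (p.2, p.1) ∈ ε}

def IsBallStructure {X : Type*} (E : Set (Set (X × X))) : Prop :=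
  (∀ ε ∈ E, Set.diagonal _ ⊆ ε) ∧
  (∀ ε ∈ E, ∀ δ ∈ E, ∃ lam ∈ E, relComp ε (relInv δ) ⊆ lam) ∧
  ⋃₀ E = Set.univ

def IsCoarseStructure {X : Type*} (E : Set (Set (X × X))) : Prop :=
  IsBallStructure E ∧
  ∀ ε ∈ E, ∀ δ : Set (X × X), Set.diagonal _ ⊆ δ → δ ⊆ ε → δ ∈ E

def ball {X : Type*} (ε : Set (X × X)) (x : X) : Set X :=
  {y | (x, y) ∈ ε}

def IsBoundedIn {X : Type*} (E : Set (Set (X × X))) (B : Set X) : Prop :=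
  B = ∅ ∨ ∃ x : X, ∃ ε ∈ E, B ⊆ ball ε x

/-- The entourage `ε_A = {(x,y) : y ∈ {x} ∪ Ax}` determined by `A ⊆ G`. -/
def entOf {G : Type*} [Group G] (A : Set G) : Set (G × G) :=
  {p | p.2 = p.1 ∨ ∃ a ∈ A, p.2 = a * p.1}

/-- The coarse structure `𝓔_𝓘` on a group determined by a group bornology `𝓘`. -/
def EI {G : Type*} [Group G] (I : Set (Set G)) : Set (Set (G × G)) :=
  {δ | Set.diagonal _ ⊆ δ ∧ ∃ A ∈ I, δ ⊆ entOf A}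

theorem stmt12 {G : Type*} [Group G] (𝓘 : Set (Set G))
    (h : IsGroupBornology 𝓘) :
    IsCoarseStructure (EI 𝓘) ∧
    (∀ δ ∈ EI 𝓘, ∃ A ∈ 𝓘, δ ⊆ entOf A) ∧ (∀ A ∈ 𝓘, entOf A ∈ EI 𝓘) ∧
    ∀ B : Set G, IsBoundedIn (EI 𝓘) B ↔ B ∈ 𝓘 := by
  obtain ⟨⟨⟨hempty, hdown, hunion⟩, hfin, hcover⟩, hmul⟩ := h
  have hinv : ∀ A ∈ 𝓘, A⁻¹ ∈ 𝓘 := by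
    intro A hA
    have h1 : ({1} : Set G) ∈ 𝓘 := hfin _ (Set.finite_singleton 1)
    have := hmul _ h1 _ hA
    simpa using this
  have hentOf : ∀ A ∈ 𝓘, entOf A ∈ EI 𝓘 := by
    intro A hA
    refine ⟨?_, A, hA, subset_rfl⟩
    intro p hp
    rw [Set.mem_diagonal_iff] at hp
    exact Or.inl hp.symm
  refine ⟨⟨⟨?_, ?_, ?_⟩, ?_⟩, ?_, hentOf, ?_⟩
  · intro ε hε
    exact hε.1
  · -- composition
    rintro ε ⟨-, A, hA, hεA⟩ δ ⟨-, B, hB, hδB⟩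
    have hC : A ∪ (B⁻¹ ∪ B⁻¹ * A) ∈ 𝓘 := by
      refine hunion _ hA _ (hunion _ (hinv _ hB) _ ?_)
      have : B⁻¹ * (A⁻¹)⁻¹ ∈ 𝓘 := hmul _ (hinv _ hB) _ (hinv _ hA)
      simpa using this
    refine ⟨entOf _, hentOf _ hC, ?_⟩
    rintro ⟨x, z⟩ ⟨y, hxy, hzy⟩
    have hxy' := hεA hxy
    have hzy' := hδB hzy
    rcases hxy' with h1 | ⟨a, ha, h1⟩ <;> rcases hzy' with h2 | ⟨b, hb, h2⟩
    · exact Or.inl (by simp only at h1 h2; rw [h1] at h2; exact h2.symm)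
    · simp only at h1 h2
      refine Or.inr ⟨b⁻¹, Or.inr (Or.inl (by simpa using Set.inv_mem_inv.mpr hb)), ?_⟩
      rw [h1] at h2; rw [h2]; group
    · simp only at h1 h2
      exact Or.inr ⟨a, Or.inl ha, by rw [← h2]; exact h1⟩
    · simp only at h1 h2
      refine Or.inr ⟨b⁻¹ * a, Or.inr (Or.inr ?_), ?_⟩
      · exact Set.mul_mem_mul (by simpa using Set.inv_mem_inv.mpr hb) ha
      · rw [h1] at h2
        have : z = b⁻¹ * (a * x) := by rw [h2]; group
        rw [this]; group
  · -- cover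
    apply Set.eq_univ_of_forall
    rintro ⟨x, y⟩
    refine ⟨entOf {y * x⁻¹}, hentOf _ (hfin _ (Set.finite_singleton _)), ?_⟩
    exact Or.inr ⟨y * x⁻¹, rfl, by group⟩
  · -- downward closed
    rintro ε ⟨-, A, hA, hεA⟩ δ hid hδε
    exact ⟨hid, A, hA, hδε.trans hεA⟩
  · intro δ hδ; exact hδ.2
  · intro B
    constructor
    · rintro (rfl | ⟨x, ε, ⟨-, A, hA, hεA⟩, hB⟩)
      · exact hempty
      · refine hdown _ (hunion _ (hfin {x} (Set.finite_singleton x)) _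
          (hmul _ hA _ (hfin {x⁻¹} (Set.finite_singleton _)))) _ ?_
        intro y hy
        rcases hεA (hB hy) with h1 | ⟨a, ha, h1⟩
        · exact Or.inl (by simpa using h1)
        · refine Or.inr ?_
          simp only at h1
          rw [h1]
          exact Set.mul_mem_mul ha (by simp)
    · intro hB
      refine Or.inr ⟨1, entOf B, hentOf _ hB, ?_⟩
      intro y hy
      exact Or.inr ⟨y, hy, by group⟩
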